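/- Let Y be a polynomial process with truncated signature 𝕐^n and let 𝕐_s^{-1} be defined by the group inverse relation e_∅ = 𝕐_s^{-1} ⊗ 𝕐_s. Then for each s ≤ u ≤ t and |I| ≤ n, the conditional expectation of a two-parameter signature component satisfies E[⟨e_I, 𝕐_{s,t}⟩ | F_u] = Σ_{e_{I₁} ⊗ e_{I₂} = e_I} ⟨e_{I₁}, 𝕐_s^{-1}⟩ · vec(e_{I₂})^T e^{(t−u)G^T} vec(𝕐_u^n), where G is the d_n-dimensional matrix representative of the dual operator of 𝕐. -/

import Mathlib

open MeasureTheory intervalIntegral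

/-- Words (multi-indices) over an alphabet of `d` letters. -/
abbrev Word (d : ℕ) := List (Fin d)

/-- The shuffle product of two words, as a multiset of words. -/
def shuffle {d : ℕ} : Word d → Word d → Multiset (Word d)
  | [], J => {J}
  | I, [] => {I}
  | i :: I, j :: J =>
      (shuffle I (j :: J)).map (i :: ·) + (shuffle (i :: I) J).map (j :: ·)
  termination_by I J => I.length + J.length

/-- Pairing of a linear functional on words with a formal sum of words. -/
def pairWith {d : ℕ} (f : Word d → ℝ) (m : Multiset (Word d)) : ℝ :=
  (m.map f).sum

/-- Coefficient of the word `K` in `e_I ⧢ u`, for a finitely supported `u ∈ T(ℝ^d)`. -/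
noncomputable def shufCoeff {d : ℕ} (I : Word d) (u : Word d →₀ ℝ) (K : Word d) : ℝ :=
  ∑ J ∈ u.support, u J * ((shuffle I J).count K : ℝ)

/-- The dual operator `L`:
`L e_∅ = 0`, `L e_I = e_{I'} ⧢ 𝐛_{i_{|I|}} + (1/2) e_{I''} ⧢ 𝐚_{i_{|I|-1} i_{|I|}}`
(coefficient of `e_K`), where `𝐛_j, 𝐚_{ij} ∈ T(ℝ^d)` encode drift and diffusion. -/
noncomputable def Lop {d : ℕ} (b : Fin d → Word d →₀ ℝ) (a : Fin d → Fin d → Word d →₀ ℝ)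
    (I : Word d) : Word d → ℝ :=
  match I.reverse with
  | [] => 0
  | [i] => shufCoeff ([] : Word d) (b i)
  | i :: j :: Irr => fun K =>
      shufCoeff (j :: Irr).reverse (b i) K + (1 / 2) * shufCoeff Irr.reverse (a j i) K


/-- Entry of the matrix exponential `e^{τ Gᵀ}` read through words (zero off `𝒲`). -/
noncomputable def expEnt {d : ℕ} (𝒲 : Finset (Word d)) (G : Matrix 𝒲 𝒲 ℝ)
    (τ : ℝ) (K : Word d) (H : 𝒲) : ℝ :=
  if hK : K ∈ 𝒲 then NormedSpace.exp (τ • G.transpose) ⟨K, hK⟩ H else 0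

/-- **Conditional expectation of two-parameter signature components** (Remark 4.7).
With `𝕐_s^{-1}` the group inverse of the signature (`e_∅ = 𝕐_s^{-1} ⊗ 𝕐_s`) and
`𝕐_{s,t} = 𝕐_s^{-1} ⊗ 𝕐_t` (Chen), for `s ≤ u ≤ t` and `|I| ≤ n`:
`E[⟨e_I, 𝕐_{s,t}⟩ | 𝓕_u] = Σ_{e_{I₁}⊗e_{I₂}=e_I} ⟨e_{I₁}, 𝕐_s^{-1}⟩ ·
vec(e_{I₂})ᵀ e^{(t−u)Gᵀ} vec(𝕐_u^n)`. -/
theorem cond_exp_two_parameter_signature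
    {d n : ℕ} {Ω : Type} [MeasurableSpace Ω] (μ : Measure Ω) [IsProbabilityMeasure μ]
    (ℱ : Filtration ℝ (by infer_instance : MeasurableSpace Ω))
    (sigY sigInv : Word d → ℝ → Ω → ℝ)
    (sig2 : Word d → ℝ → ℝ → Ω → ℝ)
    (𝒲 : Finset (Word d)) (h𝒲 : ∀ K : Word d, K ∈ 𝒲 ↔ K.length ≤ n)
    -- the group inverse 𝕐_s^{-1}:
    (hinv0 : ∀ s ω, sigInv [] s ω = 1)
    (hinv : ∀ (I : Word d), I ≠ [] → ∀ s ω,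
      ∑ k ∈ Finset.range (I.length + 1), sigInv (I.take k) s ω * sigY (I.drop k) s ω = 0)
    -- Chen's identity: 𝕐_{s,t} = 𝕐_s^{-1} ⊗ 𝕐_t:
    (hchen : ∀ I s t ω, sig2 I s t ω
      = ∑ k ∈ Finset.range (I.length + 1), sigInv (I.take k) s ω * sigY (I.drop k) t ω)
    -- polynomial moment formula:
    (G : Matrix 𝒲 𝒲 ℝ)
    (hmoment : ∀ (J : 𝒲) (u t : ℝ), u ≤ t →
      μ[sigY J.1 t | ℱ u] =ᵐ[μ]
        fun ω => ∑ H : 𝒲, NormedSpace.exp ((t - u) • G.transpose) J H * sigY H.1 u ω)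
    -- adaptedness and integrability:
    (hadapt : ∀ I : Word d, Adapted ℱ (sigInv I))
    (hint : ∀ (I : Word d) (t : ℝ), Integrable (sigY I t) μ)
    (hint2 : ∀ (I : Word d) (k : ℕ) (s t : ℝ),
      Integrable (fun ω => sigInv (I.take k) s ω * sigY (I.drop k) t ω) μ)
    (I : Word d) (hI : I.length ≤ n) (s u t : ℝ) (hsu : s ≤ u) (hut : u ≤ t) :
    μ[sig2 I s t | ℱ u] =ᵐ[μ] fun ω =>
      ∑ k ∈ Finset.range (I.length + 1),
        sigInv (I.take k) s ω *
          ∑ H : 𝒲, expEnt 𝒲 G (t - u) (I.drop k) H * sigY H.1 u ω := by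
  have hdrop : ∀ k : ℕ, I.drop k ∈ 𝒲 := fun k =>
    (h𝒲 _).2 (le_trans (by simp) hI)
  have hfun : sig2 I s t = fun ω => ∑ k ∈ Finset.range (I.length + 1),
      sigInv (I.take k) s ω * sigY (I.drop k) t ω := funext (hchen I s t)
  rw [hfun]
  have h1 : μ[(fun ω => ∑ k ∈ Finset.range (I.length + 1),
        sigInv (I.take k) s ω * sigY (I.drop k) t ω) | ℱ u]
      =ᵐ[μ] ∑ k ∈ Finset.range (I.length + 1),
        μ[(fun ω => sigInv (I.take k) s ω * sigY (I.drop k) t ω) | ℱ u] := by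
    have := condExp_finset_sum (μ := μ) (m := ℱ u)
      (f := fun k ω => sigInv (I.take k) s ω * sigY (I.drop k) t ω)
      (s := Finset.range (I.length + 1)) (fun k _ => hint2 I k s t)
    have heq : (fun ω => ∑ k ∈ Finset.range (I.length + 1),
        sigInv (I.take k) s ω * sigY (I.drop k) t ω)
      = ∑ k ∈ Finset.range (I.length + 1),
          fun ω => sigInv (I.take k) s ω * sigY (I.drop k) t ω := by
      funext ω; simp
    rw [heq]; exact this
  refine h1.trans ?_
  have hterm : ∀ k ∈ Finset.range (I.length + 1),
      μ[(fun ω => sigInv (I.take k) s ω * sigY (I.drop k) t ω) | ℱ u]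
        =ᵐ[μ] fun ω => sigInv (I.take k) s ω *
          ∑ H : 𝒲, expEnt 𝒲 G (t - u) (I.drop k) H * sigY H.1 u ω := by
    intro k _
    have hmeas : StronglyMeasurable[ℱ u] (sigInv (I.take k) s) :=
      ((hadapt (I.take k) s).mono (ℱ.mono hsu) le_rfl).stronglyMeasurable
    have hmul := condExp_mul_of_stronglyMeasurable_left hmeas (hint2 I k s t) (hint (I.drop k) t)
    refine hmul.trans ?_
    have hm := hmoment ⟨I.drop k, hdrop k⟩ u t hut
    filter_upwards [hm] with ω hω
    simp only [Pi.mul_apply]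
    rw [hω]
    congr 1
    refine Finset.sum_congr rfl fun H _ => ?_
    rw [expEnt, dif_pos (hdrop k)]
  have hall : ∀ᵐ ω ∂μ, ∀ k ∈ Finset.range (I.length + 1),
      (μ[(fun ω => sigInv (I.take k) s ω * sigY (I.drop k) t ω) | ℱ u]) ω
        = sigInv (I.take k) s ω *
          ∑ H : 𝒲, expEnt 𝒲 G (t - u) (I.drop k) H * sigY H.1 u ω := by
    rw [Filter.eventually_all_finset]
    exact hterm
  filter_upwards [hall] with ω hω
  simp only [Finset.sum_apply]
  exact Finset.sum_congr rfl hω
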